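/- Let f(x,y,z,w) = (1+x+y)^3 (1+z+w)^3 / (xyzw) − 36. Then the constant term of f^d equals Σ_{k+l=d} (3l)!(3l)!(k+l)!/(k!(l!)^7) · (−36)^k for every d ≥ 0. -/

import Mathlib

open scoped Nat

/-- Laurent polynomials in 4 variables over `ℂ`. -/
noncomputable abbrev LaurentPoly4 : Type := AddMonoidAlgebra ℂ (Fin 4 →₀ ℤ)

/-- The monomial `x^{v 0} y^{v 1} z^{v 2} w^{v 3}`. -/
noncomputable def mono4 (v : Fin 4 →₀ ℤ) : LaurentPoly4 := AddMonoidAlgebra.single v 1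

/-- `f = (1+x+y)^3 (1+z+w)^3 / (x y z w) − 36`, the mirror of the `(3,3)` complete
intersection in `ℙ⁶`. -/
noncomputable def mirror33 : LaurentPoly4 :=
  (1 + mono4 (Finsupp.single 0 1) + mono4 (Finsupp.single 1 1)) ^ 3
      * (1 + mono4 (Finsupp.single 2 1) + mono4 (Finsupp.single 3 1)) ^ 3
      * mono4 (-(Finsupp.single 0 1 + Finsupp.single 1 1 + Finsupp.single 2 1 + Finsupp.single 3 1))
    - 36

open Finset AddMonoidAlgebra


lemma trinom_expand (a b : Fin 4 →₀ ℤ) (n : ℕ) :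
    ((1 : LaurentPoly4) + AddMonoidAlgebra.single a 1 + AddMonoidAlgebra.single b 1) ^ n =
      ∑ j ∈ Finset.range (n+1), ∑ m ∈ Finset.HasAntidiagonal.antidiagonal j,
        AddMonoidAlgebra.single (m.1 • a + m.2 • b)
          ((n.choose j * j.choose m.1 : ℕ) : ℂ) := by
  have h : (1 : LaurentPoly4) + AddMonoidAlgebra.single a 1 + AddMonoidAlgebra.single b 1
      = (AddMonoidAlgebra.single a 1 + AddMonoidAlgebra.single b 1) + 1 := by ring
  rw [h, add_pow]
  refine Finset.sum_congr rfl fun j hj => ?_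
  rw [one_pow, mul_one, Commute.add_pow' (Commute.all _ _), Finset.sum_mul]
  refine Finset.sum_congr rfl fun m hm => ?_
  rw [smul_mul_assoc, AddMonoidAlgebra.single_pow, AddMonoidAlgebra.single_pow,
    AddMonoidAlgebra.single_mul_single, one_pow, one_pow, one_mul,
    AddMonoidAlgebra.natCast_def, AddMonoidAlgebra.single_mul_single, add_zero, one_mul,
    AddMonoidAlgebra.smul_single, Nat.cast_mul, nsmul_eq_mul]
  ring_nf

lemma trinom_coeff (i1 i2 : Fin 4) (h12 : i1 ≠ i2) (n l : ℕ) :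
    ((((1 : LaurentPoly4) + AddMonoidAlgebra.single (Finsupp.single i1 1) 1
        + AddMonoidAlgebra.single (Finsupp.single i2 1) 1) ^ n : LaurentPoly4)).coeff
      (Finsupp.single i1 (l : ℤ) + Finsupp.single i2 (l : ℤ)) =
      ((n.choose (2 * l) * (2 * l).choose l : ℕ) : ℂ) := by
  rw [trinom_expand, AddMonoidAlgebra.coeff_sum, Finset.sum_apply']
  have hsm : ∀ (p : ℕ) (i : Fin 4), p • Finsupp.single i (1 : ℤ) = Finsupp.single i (p : ℤ) := by
    intro p i
    rw [Finsupp.smul_single, nsmul_eq_mul, mul_one]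
  have key : ∀ p q : ℕ,
      (Finsupp.single i1 (p : ℤ) + Finsupp.single i2 (q : ℤ)
        = Finsupp.single i1 (l : ℤ) + Finsupp.single i2 (l : ℤ)) ↔ (p = l ∧ q = l) := by
    intro p q
    constructor
    · intro h
      have h1 := DFunLike.congr_fun h i1
      have h2 := DFunLike.congr_fun h i2
      simp [Finsupp.single_apply, h12, h12.symm, Ne.symm h12] at h1 h2
      exact ⟨by exact_mod_cast h1, by exact_mod_cast h2⟩
    · rintro ⟨rfl, rfl⟩; rfl
  calc _ = ∑ j ∈ Finset.range (n+1), ∑ m ∈ Finset.HasAntidiagonal.antidiagonal j,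
          (if m = ((l : ℕ), (l : ℕ)) then ((n.choose j * j.choose m.1 : ℕ) : ℂ) else 0) := by
        refine Finset.sum_congr rfl fun j hj => ?_
        rw [AddMonoidAlgebra.coeff_sum, Finset.sum_apply']
        refine Finset.sum_congr rfl fun m hm => ?_
        rw [AddMonoidAlgebra.coeff_single, hsm, hsm, Finsupp.single_apply]
        congr 1
        rw [key m.1 m.2, Prod.ext_iff]
    _ = ∑ j ∈ Finset.range (n+1),
          (if l + l = j then ((n.choose j * j.choose l : ℕ) : ℂ) else 0) := by
        refine Finset.sum_congr rfl fun j hj => ?_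
        rw [Finset.sum_ite_eq' (Finset.HasAntidiagonal.antidiagonal j) ((l : ℕ), (l : ℕ))
          (fun m => ((n.choose j * j.choose m.1 : ℕ) : ℂ))]
        simp [Finset.mem_antidiagonal]
    _ = ((n.choose (2 * l) * (2 * l).choose l : ℕ) : ℂ) := by
        simp only [eq_comm (a := l + l)]
        rw [Finset.sum_ite_eq' (Finset.range (n+1)) (l + l)
          (fun j => ((n.choose j * j.choose l : ℕ) : ℂ))]
        by_cases h : l + l ∈ Finset.range (n + 1)
        · rw [if_pos h]; norm_num [two_mul]
        · rw [if_neg h]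
          rw [Finset.mem_range, not_lt] at h
          rw [Nat.choose_eq_zero_of_lt (by omega)]
          simp

lemma trinom_support (i1 i2 j : Fin 4) (hj1 : j ≠ i1) (hj2 : j ≠ i2) (n : ℕ) :
    ∀ v ∈ (((1 : LaurentPoly4) + AddMonoidAlgebra.single (Finsupp.single i1 1) 1
        + AddMonoidAlgebra.single (Finsupp.single i2 1) 1) ^ n).coeff.support, v j = 0 := by
  induction n with
  | zero =>
      intro v hv
      rw [pow_zero] at hv
      have := Finsupp.support_single_subset (a := (0 : Fin 4 →₀ ℤ)) (b := (1:ℂ)) hv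
      simp at this
      simp [this]
  | succ n ih =>
      intro v hv
      rw [pow_succ] at hv
      have hmem := AddMonoidAlgebra.support_coeff_mul_subset _ _ hv
      rw [Finset.mem_add] at hmem
      obtain ⟨p, hp, q, hq, rfl⟩ := hmem
      have hpj : p j = 0 := ih p hp
      have hqj : q j = 0 := by
        rw [AddMonoidAlgebra.coeff_add, AddMonoidAlgebra.coeff_add] at hq
        have h1 := Finsupp.support_add hq
        rw [Finset.mem_union] at h1
        rcases h1 with h1 | h1
        · have h2 := Finsupp.support_add h1
          rw [Finset.mem_union] at h2
          rcases h2 with h2 | h2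
          · have := Finsupp.support_single_subset (α := Fin 4 →₀ ℤ) h2
            simp only [AddMonoidAlgebra.one_def] at *
            have : q = 0 := by simpa using this
            simp [this]
          · have := Finsupp.support_single_subset h2
            have : q = Finsupp.single i1 1 := by simpa using this
            simp [this, Finsupp.single_apply, Ne.symm hj1, hj1]
        · have := Finsupp.support_single_subset h1
          have : q = Finsupp.single i2 1 := by simpa using this
          simp [this, Finsupp.single_apply, Ne.symm hj2, hj2]
      simp [hpj, hqj]

lemma factor_coeff (f g : LaurentPoly4) (u p q : Fin 4 →₀ ℤ)
    (hpq : p + q = u)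
    (hf : ∀ v ∈ f.coeff.support, v 2 = 0 ∧ v 3 = 0)
    (hg : ∀ v ∈ g.coeff.support, v 0 = 0 ∧ v 1 = 0)
    (hp : p 2 = 0 ∧ p 3 = 0) (hq : q 0 = 0 ∧ q 1 = 0) :
    (f * g).coeff u = f.coeff p * g.coeff q := by
  classical
  rw [AddMonoidAlgebra.coeff_mul, Finsupp.sum]
  have inner : ∀ a : Fin 4 →₀ ℤ,
      (Finsupp.sum g.coeff fun a₂ b₂ => if a + a₂ = u then f.coeff a * b₂ else 0)
        = f.coeff a * g.coeff (u - a) := by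
    intro a
    rw [Finsupp.sum]
    have step := Finset.sum_eq_single (s := g.coeff.support)
      (f := fun b => if a + b = u then f.coeff a * g.coeff b else 0) (u - a)
      (fun b hb hbne => if_neg (fun h => hbne (by rw [← h]; abel)))
      (fun h => by
        have hz : g.coeff (u - a) = 0 := Finsupp.notMem_support_iff.mp h
        simp [hz])
    rw [step]
    have : a + (u - a) = u := by abel
    simp only [this, if_true, eq_self_iff_true]
  rw [Finset.sum_congr rfl (fun a _ => inner a)]
  have huq : u - p = q := by rw [← hpq]; abel
  have step := Finset.sum_eq_single (s := f.coeff.support)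
    (f := fun a => f.coeff a * g.coeff (u - a)) p
    (fun a ha hane => by
      by_cases hga : g.coeff (u - a) = 0
      · rw [hga, mul_zero]
      · exfalso
        apply hane
        have hmem := Finsupp.mem_support_iff.mpr hga
        have h1 := hg _ hmem
        have h2 := hf _ ha
        have e0 : u 0 - a 0 = 0 := by
          have := h1.1; rwa [Finsupp.sub_apply] at this
        have e1 : u 1 - a 1 = 0 := by
          have := h1.2; rwa [Finsupp.sub_apply] at this
        have eu0 : u 0 = p 0 + q 0 := by rw [← hpq]; simp
        have eu1 : u 1 = p 1 + q 1 := by rw [← hpq]; simp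
        ext i
        fin_cases i
        · show a 0 = p 0
          rw [eu0, hq.1] at e0; omega
        · show a 1 = p 1
          rw [eu1, hq.2] at e1; omega
        · show a 2 = p 2
          rw [h2.1, hp.1]
        · show a 3 = p 3
          rw [h2.2, hp.2])
    (fun h => by
      have hz : f.coeff p = 0 := Finsupp.notMem_support_iff.mp h
      simp [hz])
  rw [step]
  simp only [huq]

lemma arith_aux (a b c e f m : ℂ) (hb : b ≠ 0) (hc : c ≠ 0) (hf : f ≠ 0) :
    a / (b*c) * (b/(c*c)) * (a/(b*c) * (b/(c*c))) * (1 * m * (e/(c*f))) = a*a*e/(f*c^7)*m := by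
  have h1 : a / (b*c) * (b/(c*c)) * (a/(b*c) * (b/(c*c))) * (1 * m * (e/(c*f)))
      = (a*b*(a*b)*(m*e)) / ((b*c)*(c*c)*((b*c)*(c*c))*(c*f)) := by
    simp only [one_mul, div_mul_div_comm, mul_div_assoc']
    ring_nf
  have h2 : a*a*e/(f*c^7)*m = (a*a*e*m) / (f*c^7) := by ring
  rw [h1, h2, div_eq_div_iff
    (by apply_rules [mul_ne_zero] : (b*c)*(c*c)*((b*c)*(c*c))*(c*f) ≠ 0)
    (mul_ne_zero hf (pow_ne_zero _ hc))]
  ring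

/-- The constant term of `f^d` equals
`Σ_{k+l=d} (3l)!(3l)!(k+l)!/(k!(l!)^7) (−36)^k`. -/
theorem mirror33_constant_term (d : ℕ) :
    (mirror33 ^ d).coeff 0 =
      ∑ l ∈ Finset.range (d + 1),
        (((3 * l)! : ℂ) * ((3 * l)! : ℂ) * (((d - l) + l)! : ℂ))
            / (((d - l)! : ℂ) * ((l ! : ℂ)) ^ 7) * (-36 : ℂ) ^ (d - l) := by
  classical
  set e0 : Fin 4 →₀ ℤ := Finsupp.single 0 1 with he0
  set e1 : Fin 4 →₀ ℤ := Finsupp.single 1 1 with he1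
  set e2 : Fin 4 →₀ ℤ := Finsupp.single 2 1 with he2
  set e3 : Fin 4 →₀ ℤ := Finsupp.single 3 1 with he3
  set A : LaurentPoly4 := 1 + AddMonoidAlgebra.single e0 1 + AddMonoidAlgebra.single e1 1 with hA
  set B : LaurentPoly4 := 1 + AddMonoidAlgebra.single e2 1 + AddMonoidAlgebra.single e3 1 with hB
  set s : Fin 4 →₀ ℤ := -(e0 + e1 + e2 + e3) with hs
  have hm : mirror33 = A ^ 3 * B ^ 3 * AddMonoidAlgebra.single s 1 + (-36) := by
    rw [mirror33, sub_eq_add_neg]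
    rfl
  have h36 : ((-36 : LaurentPoly4)) = AddMonoidAlgebra.single 0 (-36 : ℂ) := by
    have : ((36 : LaurentPoly4)) = ((36 : ℕ) : LaurentPoly4) := by norm_cast
    rw [show ((-36 : LaurentPoly4)) = -(36 : LaurentPoly4) by ring, this,
      AddMonoidAlgebra.natCast_def, ← AddMonoidAlgebra.single_neg]
    norm_num
  rw [hm, add_pow, AddMonoidAlgebra.coeff_sum, Finset.sum_apply']
  refine Finset.sum_congr rfl fun l hl => ?_
  have hld : l ≤ d := by
    rw [Finset.mem_range] at hl; omega
  -- compute the term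
  have hP : (A ^ 3 * B ^ 3 * AddMonoidAlgebra.single s 1) ^ l
      = A ^ (3 * l) * B ^ (3 * l) * AddMonoidAlgebra.single (l • s) 1 := by
    rw [mul_pow, mul_pow, AddMonoidAlgebra.single_pow, one_pow, ← pow_mul, ← pow_mul]
  have hneg : ((-36 : LaurentPoly4)) ^ (d - l)
      = AddMonoidAlgebra.single 0 ((-36 : ℂ) ^ (d - l)) := by
    rw [h36, AddMonoidAlgebra.single_pow, smul_zero]
  have hcast : ((d.choose l : ℕ) : LaurentPoly4)
      = AddMonoidAlgebra.single 0 ((d.choose l : ℕ) : ℂ) :=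
    AddMonoidAlgebra.natCast_def _
  rw [hP, hneg, hcast, mul_assoc (A ^ (3*l) * B ^ (3*l)), AddMonoidAlgebra.single_mul_single,
    mul_assoc (A ^ (3*l) * B ^ (3*l)), AddMonoidAlgebra.single_mul_single,
    AddMonoidAlgebra.coeff_mul_single_apply]
  have hzs : (0 : Fin 4 →₀ ℤ) + -(l • s + 0 + 0) = l • (e0 + e1 + e2 + e3) := by
    rw [add_zero, add_zero, zero_add, hs, smul_neg, neg_neg]
  rw [hzs]
  have hsm : ∀ (i : Fin 4), l • Finsupp.single i (1 : ℤ) = Finsupp.single i (l : ℤ) := by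
    intro i; rw [Finsupp.smul_single, nsmul_eq_mul, mul_one]
  have hsplit : l • (e0 + e1 + e2 + e3)
      = (Finsupp.single 0 (l : ℤ) + Finsupp.single 1 (l : ℤ))
        + (Finsupp.single 2 (l : ℤ) + Finsupp.single 3 (l : ℤ)) := by
    rw [he0, he1, he2, he3, smul_add, smul_add, smul_add, hsm, hsm, hsm, hsm]
    abel
  rw [hsplit]
  have hfact := factor_coeff (A ^ (3*l)) (B ^ (3*l)) _
    (Finsupp.single 0 (l : ℤ) + Finsupp.single 1 (l : ℤ))
    (Finsupp.single 2 (l : ℤ) + Finsupp.single 3 (l : ℤ))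
    rfl
    (fun v hv => ⟨trinom_support 0 1 2 (by decide) (by decide) (3*l) v hv,
      trinom_support 0 1 3 (by decide) (by decide) (3*l) v hv⟩)
    (fun v hv => ⟨trinom_support 2 3 0 (by decide) (by decide) (3*l) v hv,
      trinom_support 2 3 1 (by decide) (by decide) (3*l) v hv⟩)
    (by constructor <;> simp [Finsupp.single_apply])
    (by constructor <;> simp [Finsupp.single_apply])
  rw [hfact, trinom_coeff 0 1 (by decide) (3*l) l, trinom_coeff 2 3 (by decide) (3*l) l]
  -- now pure arithmetic
  have h1 : (((3*l).choose (2*l) : ℕ) : ℂ) = ((3*l)! : ℂ) / (((2*l)! : ℂ) * ((l)! : ℂ)) := by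
    rw [Nat.cast_choose ℂ (by omega : 2*l ≤ 3*l), show 3*l - 2*l = l by omega]
  have h2 : (((2*l).choose l : ℕ) : ℂ) = ((2*l)! : ℂ) / (((l)! : ℂ) * ((l)! : ℂ)) := by
    rw [Nat.cast_choose ℂ (by omega : l ≤ 2*l), show 2*l - l = l by omega]
  have h3 : ((d.choose l : ℕ) : ℂ) = ((d)! : ℂ) / (((l)! : ℂ) * ((d-l)! : ℂ)) := by
    rw [Nat.cast_choose ℂ hld]
  rw [show d - l + l = d by omega]
  have n1 : ((l)! : ℂ) ≠ 0 := Nat.cast_ne_zero.mpr (Nat.factorial_ne_zero _)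
  have n2 : (((2*l))! : ℂ) ≠ 0 := Nat.cast_ne_zero.mpr (Nat.factorial_ne_zero _)
  have n3 : (((d-l))! : ℂ) ≠ 0 := Nat.cast_ne_zero.mpr (Nat.factorial_ne_zero _)
  push_cast [h1, h2, h3]
  exact arith_aux _ _ _ _ _ _ n2 n1 n3
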